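/- Let R₁, R_z > 0 and p ∈ [1, ∞). Let μ₁, μ₂ be Borel probability measures on ℝ^d supported in the closed ball B̄(R₁), and let z ∈ ℝ^d with ‖z‖ ≤ R_z. Then for every coupling π of μ₁ and μ₂ one has |1/γ₂(z, μ₁) − 1/γ₂(z, μ₂)| ≤ R_z · exp((3 + 2/p) R_z R₁) · (∫ ‖x − y‖^p dπ(x, y))^{1/p}. -/

import Mathlib

open MeasureTheory
open scoped RealInnerProductSpace

/-- The normalisation constant `γ₂(z, μ) = ∫ exp⟨z,y⟩ dμ(y)`. -/
noncomputable def gamma2 {d : ℕ} (z : EuclideanSpace ℝ (Fin d))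
    (μ : Measure (EuclideanSpace ℝ (Fin d))) : ℝ :=
  ∫ y, Real.exp ⟪z, y⟫ ∂μ

/-- The attention map `γ(z, μ) = (∫ exp⟨z,y⟩ • y dμ(y)) / γ₂(z, μ)`. -/
noncomputable def gammaAttn {d : ℕ} (z : EuclideanSpace ℝ (Fin d))
    (μ : Measure (EuclideanSpace ℝ (Fin d))) : EuclideanSpace ℝ (Fin d) :=
  (gamma2 z μ)⁻¹ • ∫ y, Real.exp ⟪z, y⟫ • y ∂μ

/-- `exp` is Lipschitz with constant `exp c` on `(-∞, c]`. -/
lemma aux_abs_exp_sub_exp_le {a b c : ℝ} (ha : a ≤ c) (hb : b ≤ c) :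
    |Real.exp a - Real.exp b| ≤ Real.exp c * |a - b| := by
  wlog hab : b ≤ a generalizing a b
  · rw [abs_sub_comm, abs_sub_comm a b]; exact this hb ha (le_of_not_ge hab)
  rw [abs_of_nonneg (sub_nonneg.2 (Real.exp_le_exp.2 hab)),
    abs_of_nonneg (sub_nonneg.2 hab)]
  have h := Real.add_one_le_exp (b - a)
  have h2 : Real.exp b = Real.exp a * Real.exp (b - a) := by
    rw [← Real.exp_add]; ring_nf
  nlinarith [Real.exp_pos a, Real.exp_le_exp.2 ha]

/-- `L¹`-norm is at most `Lᵖ`-norm on a probability space, for bounded nonneg functions. -/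
lemma aux_int_le_rpow {α : Type*} [MeasurableSpace α] (μ : Measure α)
    [IsProbabilityMeasure μ] {f : α → ℝ} {p : ℝ} (hp : 1 ≤ p)
    (hf : AEStronglyMeasurable f μ) (h0 : 0 ≤ᵐ[μ] f) (C : ℝ)
    (hC : ∀ᵐ a ∂μ, ‖f a‖ ≤ C) :
    ∫ a, f a ∂μ ≤ (∫ a, f a ^ p ∂μ) ^ (1 / p) := by
  rcases eq_or_lt_of_le hp with hp1 | hp1
  · subst hp1
    simp [Real.rpow_one]
  · have hpq : p.HolderConjugate (Real.conjExponent p) :=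
      Real.HolderConjugate.conjExponent hp1
    have hmemf : MemLp f (ENNReal.ofReal p) μ := MemLp.of_bound hf C hC
    have hmemg : MemLp (fun _ : α => (1 : ℝ)) (ENNReal.ofReal (Real.conjExponent p)) μ :=
      memLp_const 1
    have := integral_mul_le_Lp_mul_Lq_of_nonneg (μ := μ) hpq h0
      (Filter.Eventually.of_forall fun _ => zero_le_one) hmemf hmemg
    simpa [Real.one_rpow] using this

abbrev Euc (d : ℕ) := EuclideanSpace ℝ (Fin d)

theorem stmt_8 {d : ℕ} (R₁ Rz p : ℝ) (hR₁ : 0 < R₁) (hRz : 0 < Rz) (hp : 1 ≤ p)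
    (μ₁ μ₂ : Measure (EuclideanSpace ℝ (Fin d)))
    [IsProbabilityMeasure μ₁] [IsProbabilityMeasure μ₂]
    (hμ₁ : μ₁ (Metric.closedBall 0 R₁) = 1) (hμ₂ : μ₂ (Metric.closedBall 0 R₁) = 1)
    (z : EuclideanSpace ℝ (Fin d)) (hz : ‖z‖ ≤ Rz)
    (π : Measure (EuclideanSpace ℝ (Fin d) × EuclideanSpace ℝ (Fin d)))
    [IsProbabilityMeasure π] (hfst : π.fst = μ₁) (hsnd : π.snd = μ₂) :
    |(gamma2 z μ₁)⁻¹ - (gamma2 z μ₂)⁻¹| ≤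
      Rz * Real.exp ((3 + 2 / p) * Rz * R₁) * (∫ q, ‖q.1 - q.2‖ ^ p ∂π) ^ (1 / p) := by
  set B : Set (Euc d) := Metric.closedBall 0 R₁ with hB
  have hBmeas : MeasurableSet B := measurableSet_closedBall
  set g : Euc d → ℝ := fun y => Real.exp ⟪z, y⟫ with hgdef
  have hg_cont : Continuous g := Real.continuous_exp.comp (continuous_const.inner continuous_id)
  -- inner product bound on the ball
  have hinner : ∀ y : Euc d, y ∈ B → |⟪z, y⟫| ≤ Rz * R₁ := by
    intro y hy
    rw [hB, Metric.mem_closedBall, dist_zero_right] at hy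
    calc |⟪z, y⟫| ≤ ‖z‖ * ‖y‖ := abs_real_inner_le_norm z y
      _ ≤ Rz * R₁ := mul_le_mul hz hy (norm_nonneg _) hRz.le
  -- bounds of g on the ball
  have hgub : ∀ y : Euc d, y ∈ B → g y ≤ Real.exp (Rz * R₁) := fun y hy =>
    Real.exp_le_exp.2 ((le_abs_self _).trans (hinner y hy))
  have hglb : ∀ y : Euc d, y ∈ B → Real.exp (-(Rz * R₁)) ≤ g y := fun y hy =>
    Real.exp_le_exp.2 (neg_le_of_abs_le (hinner y hy))
  -- a.e. membership facts
  have haemem : ∀ (μ : Measure (Euc d)) [IsProbabilityMeasure μ], μ B = 1 → ∀ᵐ y ∂μ, y ∈ B := by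
    intro μ _ hμ
    have : μ Bᶜ = 0 := (prob_compl_eq_zero_iff hBmeas).2 hμ
    rw [MeasureTheory.ae_iff]; exact this
  have hae1 : ∀ᵐ y ∂μ₁, y ∈ B := haemem μ₁ hμ₁
  have hae2 : ∀ᵐ y ∂μ₂, y ∈ B := haemem μ₂ hμ₂
  have haefst : ∀ᵐ q ∂π, q.1 ∈ B := by
    have h0 : μ₁ Bᶜ = 0 := (prob_compl_eq_zero_iff hBmeas).2 hμ₁
    have : π (Prod.fst ⁻¹' Bᶜ) = 0 := by
      rw [← Measure.fst_apply hBmeas.compl, hfst]; exact h0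
    rw [MeasureTheory.ae_iff]; exact this
  have haesnd : ∀ᵐ q ∂π, q.2 ∈ B := by
    have h0 : μ₂ Bᶜ = 0 := (prob_compl_eq_zero_iff hBmeas).2 hμ₂
    have : π (Prod.snd ⁻¹' Bᶜ) = 0 := by
      rw [← Measure.snd_apply hBmeas.compl, hsnd]; exact h0
    rw [MeasureTheory.ae_iff]; exact this
  -- integrability of g
  have hint : ∀ (μ : Measure (Euc d)) [IsProbabilityMeasure μ], (∀ᵐ y ∂μ, y ∈ B) → Integrable g μ := by
    intro μ _ hae
    refine Integrable.mono' (integrable_const (Real.exp (Rz * R₁))) hg_cont.aestronglyMeasurable ?_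
    filter_upwards [hae] with y hy
    rw [Real.norm_of_nonneg (Real.exp_pos _).le]
    exact hgub y hy
  have hint1 : Integrable g μ₁ := hint μ₁ hae1
  have hint2 : Integrable g μ₂ := hint μ₂ hae2
  -- lower bound on gamma2
  have hglow : ∀ (μ : Measure (Euc d)) [IsProbabilityMeasure μ], (∀ᵐ y ∂μ, y ∈ B) → Integrable g μ →
      Real.exp (-(Rz * R₁)) ≤ gamma2 z μ := by
    intro μ _ hae hig
    have : ∫ _ : Euc d, Real.exp (-(Rz * R₁)) ∂μ ≤ ∫ y, g y ∂μ := by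
      refine integral_mono_ae (integrable_const _) hig ?_
      filter_upwards [hae] with y hy; exact hglb y hy
    simpa [gamma2] using this
  have hg1pos : Real.exp (-(Rz * R₁)) ≤ gamma2 z μ₁ := hglow μ₁ hae1 hint1
  have hg2pos : Real.exp (-(Rz * R₁)) ≤ gamma2 z μ₂ := hglow μ₂ hae2 hint2
  have hpos1 : 0 < gamma2 z μ₁ := lt_of_lt_of_le (Real.exp_pos _) hg1pos
  have hpos2 : 0 < gamma2 z μ₂ := lt_of_lt_of_le (Real.exp_pos _) hg2pos
  -- express gamma2 via the coupling
  have e1 : gamma2 z μ₁ = ∫ q, g q.1 ∂π := by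
    rw [show gamma2 z μ₁ = ∫ y, g y ∂μ₁ from rfl, ← hfst, Measure.fst,
      integral_map measurable_fst.aemeasurable hg_cont.aestronglyMeasurable]
  have e2 : gamma2 z μ₂ = ∫ q, g q.2 ∂π := by
    rw [show gamma2 z μ₂ = ∫ y, g y ∂μ₂ from rfl, ← hsnd, Measure.snd,
      integral_map measurable_snd.aemeasurable hg_cont.aestronglyMeasurable]
  -- integrability over π
  have hintπ1 : Integrable (fun q : Euc d × Euc d => g q.1) π := by
    refine Integrable.mono' (integrable_const (Real.exp (Rz * R₁)))
      (hg_cont.comp continuous_fst).aestronglyMeasurable ?_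
    filter_upwards [haefst] with q hq
    rw [Real.norm_of_nonneg (Real.exp_pos _).le]; exact hgub _ hq
  have hintπ2 : Integrable (fun q : Euc d × Euc d => g q.2) π := by
    refine Integrable.mono' (integrable_const (Real.exp (Rz * R₁)))
      (hg_cont.comp continuous_snd).aestronglyMeasurable ?_
    filter_upwards [haesnd] with q hq
    rw [Real.norm_of_nonneg (Real.exp_pos _).le]; exact hgub _ hq
  have hnormmeas : AEStronglyMeasurable (fun q : Euc d × Euc d => ‖q.1 - q.2‖) π :=
    (continuous_fst.sub continuous_snd).norm.aestronglyMeasurable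
  have hnormbd : ∀ᵐ q ∂π, ‖q.1 - q.2‖ ≤ 2 * R₁ := by
    filter_upwards [haefst, haesnd] with q h1 h2
    rw [hB, Metric.mem_closedBall, dist_zero_right] at h1 h2
    calc ‖q.1 - q.2‖ ≤ ‖q.1‖ + ‖q.2‖ := norm_sub_le _ _
      _ ≤ 2 * R₁ := by linarith
  have hintnorm : Integrable (fun q : Euc d × Euc d => ‖q.1 - q.2‖) π := by
    refine Integrable.mono' (integrable_const (2 * R₁)) hnormmeas ?_
    filter_upwards [hnormbd] with q hq
    rwa [Real.norm_of_nonneg (norm_nonneg _)]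
  -- key estimate on |gamma2 - gamma2|
  have key : |gamma2 z μ₁ - gamma2 z μ₂| ≤
      Rz * Real.exp (Rz * R₁) * ∫ q, ‖q.1 - q.2‖ ∂π := by
    rw [e1, e2, ← integral_sub hintπ1 hintπ2]
    calc |∫ q, (g q.1 - g q.2) ∂π| ≤ ∫ q, |g q.1 - g q.2| ∂π := by
          simpa [Real.norm_eq_abs] using norm_integral_le_integral_norm (fun q : Euc d × Euc d => g q.1 - g q.2) (μ := π)
      _ ≤ ∫ q, Rz * Real.exp (Rz * R₁) * ‖q.1 - q.2‖ ∂π := by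
          refine integral_mono_ae (hintπ1.sub hintπ2).abs (hintnorm.const_mul _) ?_
          filter_upwards [haefst, haesnd] with q h1 h2
          have hb := aux_abs_exp_sub_exp_le
            ((le_abs_self _).trans (hinner _ h1)) ((le_abs_self _).trans (hinner _ h2))
          have hinn : |⟪z, q.1⟫ - ⟪z, q.2⟫| ≤ Rz * ‖q.1 - q.2‖ := by
            rw [← inner_sub_right]
            exact (abs_real_inner_le_norm z _).trans
              (mul_le_mul_of_nonneg_right hz (norm_nonneg _))
          calc |g q.1 - g q.2| ≤ Real.exp (Rz * R₁) * |⟪z, q.1⟫ - ⟪z, q.2⟫| := hb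
            _ ≤ Real.exp (Rz * R₁) * (Rz * ‖q.1 - q.2‖) :=
                mul_le_mul_of_nonneg_left hinn (Real.exp_pos _).le
            _ = Rz * Real.exp (Rz * R₁) * ‖q.1 - q.2‖ := by ring
      _ = Rz * Real.exp (Rz * R₁) * ∫ q, ‖q.1 - q.2‖ ∂π := integral_const_mul _ _
  -- L¹ ≤ Lᵖ
  have hL1Lp : ∫ q, ‖q.1 - q.2‖ ∂π ≤ (∫ q, ‖q.1 - q.2‖ ^ p ∂π) ^ (1 / p) :=
    aux_int_le_rpow π hp hnormmeas (Filter.Eventually.of_forall fun q => norm_nonneg _)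
      (2 * R₁) (by filter_upwards [hnormbd] with q hq; rwa [Real.norm_of_nonneg (norm_nonneg _)])
  -- nonnegativity of the Wasserstein term
  have hWnn : 0 ≤ (∫ q, ‖q.1 - q.2‖ ^ p ∂π) ^ (1 / p) :=
    Real.rpow_nonneg (integral_nonneg fun q => Real.rpow_nonneg (norm_nonneg _) _) _
  -- put everything together
  have hinv : |(gamma2 z μ₁)⁻¹ - (gamma2 z μ₂)⁻¹| ≤
      Real.exp (2 * (Rz * R₁)) * |gamma2 z μ₁ - gamma2 z μ₂| := by
    rw [inv_sub_inv hpos1.ne' hpos2.ne', abs_div, abs_sub_comm]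
    rw [div_le_iff₀ (by positivity)]
    have hprod : Real.exp (-(2 * (Rz * R₁))) ≤ |gamma2 z μ₁ * gamma2 z μ₂| := by
      rw [abs_of_pos (mul_pos hpos1 hpos2)]
      calc Real.exp (-(2 * (Rz * R₁))) = Real.exp (-(Rz * R₁)) * Real.exp (-(Rz * R₁)) := by
            rw [← Real.exp_add]; ring_nf
        _ ≤ gamma2 z μ₁ * gamma2 z μ₂ :=
            mul_le_mul hg1pos hg2pos (Real.exp_pos _).le hpos1.le
    calc |gamma2 z μ₁ - gamma2 z μ₂|
        = (Real.exp (2 * (Rz * R₁)) * |gamma2 z μ₁ - gamma2 z μ₂|) * Real.exp (-(2 * (Rz * R₁))) := by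
          rw [mul_comm (Real.exp (2 * (Rz * R₁))), mul_assoc, ← Real.exp_add]; simp
      _ ≤ (Real.exp (2 * (Rz * R₁)) * |gamma2 z μ₁ - gamma2 z μ₂|) * |gamma2 z μ₁ * gamma2 z μ₂| :=
          mul_le_mul_of_nonneg_left hprod (by positivity)
  have hexp : Real.exp (2 * (Rz * R₁)) * (Rz * Real.exp (Rz * R₁)) =
      Rz * Real.exp (3 * (Rz * R₁)) := by
    rw [show (3 : ℝ) * (Rz * R₁) = 2 * (Rz * R₁) + Rz * R₁ by ring, Real.exp_add]; ring
  have hfinal1 : |(gamma2 z μ₁)⁻¹ - (gamma2 z μ₂)⁻¹| ≤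
      Rz * Real.exp (3 * (Rz * R₁)) * (∫ q, ‖q.1 - q.2‖ ^ p ∂π) ^ (1 / p) := by
    calc |(gamma2 z μ₁)⁻¹ - (gamma2 z μ₂)⁻¹|
        ≤ Real.exp (2 * (Rz * R₁)) * |gamma2 z μ₁ - gamma2 z μ₂| := hinv
      _ ≤ Real.exp (2 * (Rz * R₁)) * (Rz * Real.exp (Rz * R₁) * ∫ q, ‖q.1 - q.2‖ ∂π) :=
          mul_le_mul_of_nonneg_left key (Real.exp_pos _).le
      _ = Rz * Real.exp (3 * (Rz * R₁)) * ∫ q, ‖q.1 - q.2‖ ∂π := by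
          rw [← mul_assoc, hexp]
      _ ≤ Rz * Real.exp (3 * (Rz * R₁)) * (∫ q, ‖q.1 - q.2‖ ^ p ∂π) ^ (1 / p) :=
          mul_le_mul_of_nonneg_left hL1Lp (by positivity)
  refine hfinal1.trans (mul_le_mul_of_nonneg_right (mul_le_mul_of_nonneg_left ?_ hRz.le) hWnn)
  apply Real.exp_le_exp.2
  have h2p : (0:ℝ) ≤ 2 / p := by positivity
  nlinarith [mul_pos hRz hR₁]
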